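/- Let S(·,w): {0,...,K} → (0,1] be nonincreasing with S(0,w)=1 for each w in the support of a random variable W, let S(j) := E[S(j,W)], and let G: {1,...,K} → (0,1] be nonincreasing (so that 1/G(j+1) − 1/G(j) ≥ 0). Fix k ≤ K with S(k) < 1. Then E[∑_{j=1}^k S(k,W)^2 {1/S(j,W) − 1/S(j-1,W)} / G(j)] ≤ ∑_{j=1}^k S(k)^2 {1/S(j) − 1/S(j-1)} / G(j). -/
import Mathlib

open MeasureTheory ProbabilityTheory

lemma abel_icc (c f : ℕ → ℝ) : ∀ k, 1 ≤ k →
    ∑ j ∈ Finset.Icc 1 k, c j * (f j - f (j-1))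
      = c k * f k - c 1 * f 0 - ∑ j ∈ Finset.Icc 1 (k-1), (c (j+1) - c j) * f j := by
  intro k hk
  induction k, hk using Nat.le_induction with
  | base => simp; ring
  | succ n hn ih =>
    have h2 : ∑ j ∈ Finset.Icc 1 n, (c (j+1) - c j) * f j
        = ∑ j ∈ Finset.Icc 1 (n-1), (c (j+1) - c j) * f j + (c (n+1) - c n) * f n := by
      obtain ⟨m, rfl⟩ : ∃ m, n = m + 1 := ⟨n - 1, by omega⟩
      rw [Finset.sum_Icc_succ_top (by omega : 1 ≤ m + 1)]
      simp
    rw [Finset.sum_Icc_succ_top (by omega : 1 ≤ n + 1), ih,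
      show n + 1 - 1 = n from rfl, h2]
    ring

/-- When the censoring distribution G does not depend on covariates, the adjusted
asymptotic variance E[∑_{j=1}^k S(k,W)² {1/S(j,W) - 1/S(j-1,W)} / G(j)] is at most
the unadjusted variance ∑_{j=1}^k S(k)² {1/S(j) - 1/S(j-1)} / G(j),
where S(j) := E[S(j,W)]. -/
theorem adjusted_le_unadjusted_when_C_indep_W {Ω : Type*} [MeasurableSpace Ω]
    (μ : Measure Ω) [IsProbabilityMeasure μ] (K k : ℕ) (hkK : k ≤ K)
    (Sc : ℕ → Ω → ℝ) (hScmeas : ∀ j, Measurable (Sc j))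
    (hSc0 : ∀ ω, Sc 0 ω = 1)
    (hScpos : ∀ j ≤ K, ∀ ω, 0 < Sc j ω ∧ Sc j ω ≤ 1)
    (hScanti : ∀ j, 1 ≤ j → j ≤ K → ∀ ω, Sc j ω ≤ Sc (j - 1) ω)
    (G : ℕ → ℝ) (hGpos : ∀ j ≤ K, 0 < G j ∧ G j ≤ 1)
    (hGanti : ∀ j, 1 ≤ j → j + 1 ≤ K → G (j + 1) ≤ G j)
    (S : ℕ → ℝ) (hS : ∀ j, S j = ∫ ω, Sc j ω ∂μ)
    (hSk : S k < 1) :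
    ∫ ω, ∑ j ∈ Finset.Icc 1 k, Sc k ω ^ 2 * (1 / Sc j ω - 1 / Sc (j - 1) ω) / G j ∂μ
      ≤ ∑ j ∈ Finset.Icc 1 k, S k ^ 2 * (1 / S j - 1 / S (j - 1)) / G j := by
  rcases Nat.eq_zero_or_pos k with hk0 | hk
  · subst hk0; simp
  have hScposK : ∀ j ≤ K, ∀ ω, 0 < Sc j ω := fun j hj ω => (hScpos j hj ω).1
  have hmono : ∀ i j, i ≤ j → j ≤ K → ∀ ω, Sc j ω ≤ Sc i ω := by
    intro i j hij
    induction j, hij using Nat.le_induction with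
    | base => intro _ ω; exact le_rfl
    | succ n hn ih =>
      intro hK ω
      exact le_trans (hScanti (n+1) (by omega) hK ω) (ih (by omega) ω)
  have hratio_meas : ∀ j, Measurable fun ω => Sc k ω ^ 2 / Sc j ω :=
    fun j => ((hScmeas k).pow_const 2).div (hScmeas j)
  have hratio_nn : ∀ j ≤ k, ∀ ω, 0 ≤ Sc k ω ^ 2 / Sc j ω := by
    intro j hj ω
    exact div_nonneg (sq_nonneg _) (hScposK j (hj.trans hkK) ω).le
  have hratio_bd : ∀ j ≤ k, ∀ ω, Sc k ω ^ 2 / Sc j ω ≤ 1 := by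
    intro j hj ω
    have h1 : Sc k ω ≤ Sc j ω := hmono j k hj hkK ω
    have hj0 : 0 < Sc j ω := hScposK j (hj.trans hkK) ω
    have hk1 : Sc k ω ≤ 1 := (hScpos k hkK ω).2
    have hk0' : 0 < Sc k ω := hScposK k hkK ω
    rw [div_le_one hj0]
    nlinarith
  have hratio_int : ∀ j ≤ k, Integrable (fun ω => Sc k ω ^ 2 / Sc j ω) μ := by
    intro j hj
    refine (integrable_const (1:ℝ)).mono' (hratio_meas j).aestronglyMeasurable
      (ae_of_all _ fun ω => ?_)
    rw [Real.norm_eq_abs, abs_of_nonneg (hratio_nn j hj ω)]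
    exact hratio_bd j hj ω
  have hScint : ∀ j ≤ K, Integrable (Sc j) μ := by
    intro j hj
    refine (integrable_const (1:ℝ)).mono' (hScmeas j).aestronglyMeasurable
      (ae_of_all _ fun ω => ?_)
    rw [Real.norm_eq_abs, abs_of_nonneg (hScposK j hj ω).le]
    exact (hScpos j hj ω).2
  have hSpos : ∀ j ≤ K, 0 < S j := by
    intro j hj
    rw [hS j]
    rw [integral_pos_iff_support_of_nonneg (fun ω => (hScposK j hj ω).le) (hScint j hj)]
    have hsupp : Function.support (Sc j) = Set.univ :=
      Set.eq_univ_of_forall fun ω => (hScposK j hj ω).ne'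
    rw [hsupp]
    simp
  have hS0 : S 0 = 1 := by rw [hS]; simp [hSc0]
  -- key inequality (Jensen, via tangent line)
  have key : ∀ j ≤ k, S k ^ 2 / S j ≤ ∫ ω, Sc k ω ^ 2 / Sc j ω ∂μ := by
    intro j hj
    have hjK : j ≤ K := hj.trans hkK
    set t := S k / S j with ht
    have hSj : 0 < S j := hSpos j hjK
    have hpt : ∀ ω, 2*t*Sc k ω - t^2 * Sc j ω ≤ Sc k ω ^ 2 / Sc j ω := by
      intro ω
      have hb : 0 < Sc j ω := hScposK j hjK ω
      have h2 : Sc k ω ^ 2 / Sc j ω - (2*t*Sc k ω - t^2 * Sc j ω)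
          = (Sc k ω - t * Sc j ω)^2 / Sc j ω := by
        field_simp
        ring
      nlinarith [div_nonneg (sq_nonneg (Sc k ω - t * Sc j ω)) hb.le]
    have hint1 : Integrable (fun ω => 2*t*Sc k ω - t^2*Sc j ω) μ :=
      ((hScint k hkK).const_mul _).sub ((hScint j hjK).const_mul _)
    calc S k ^ 2 / S j = 2*t*S k - t^2 * S j := by
          rw [ht]; field_simp; ring
      _ = ∫ ω, (2*t*Sc k ω - t^2 * Sc j ω) ∂μ := by
          rw [integral_sub ((hScint k hkK).const_mul _) ((hScint j hjK).const_mul _),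
            integral_const_mul, integral_const_mul, hS k, hS j]
      _ ≤ _ := integral_mono hint1 (hratio_int j hj) hpt
  -- pointwise Abel rewriting of the integrand
  have habelL : ∀ ω, ∑ j ∈ Finset.Icc 1 k, Sc k ω ^ 2 * (1 / Sc j ω - 1 / Sc (j - 1) ω) / G j
      = (1/G k) * Sc k ω - (1/G 1) * (Sc k ω ^ 2 / Sc 0 ω)
        - ∑ j ∈ Finset.Icc 1 (k-1), (1/G (j+1) - 1/G j) * (Sc k ω ^ 2 / Sc j ω) := by
    intro ω
    have h1 : ∑ j ∈ Finset.Icc 1 k, Sc k ω ^ 2 * (1 / Sc j ω - 1 / Sc (j - 1) ω) / G j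
        = ∑ j ∈ Finset.Icc 1 k, (1/G j) * (Sc k ω ^ 2 / Sc j ω - Sc k ω ^ 2 / Sc (j-1) ω) :=
      Finset.sum_congr rfl fun j _ => by ring
    rw [h1, abel_icc (fun j => 1/G j) (fun j => Sc k ω ^ 2 / Sc j ω) k hk]
    have hff : Sc k ω ^ 2 / Sc k ω = Sc k ω := by
      rw [pow_two]
      exact mul_div_cancel_right₀ _ (hScposK k hkK ω).ne'
    rw [hff]
  -- integral of the LHS
  have hint_sum : Integrable
      (fun ω => ∑ j ∈ Finset.Icc 1 (k-1), (1/G (j+1) - 1/G j) * (Sc k ω ^ 2 / Sc j ω)) μ :=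
    integrable_finset_sum _ fun j hj =>
      (hratio_int j (by have := (Finset.mem_Icc.mp hj).2; omega)).const_mul _
  have hL : ∫ ω, ∑ j ∈ Finset.Icc 1 k, Sc k ω ^ 2 * (1 / Sc j ω - 1 / Sc (j - 1) ω) / G j ∂μ
      = (1/G k) * S k - (1/G 1) * (∫ ω, Sc k ω ^ 2 / Sc 0 ω ∂μ)
        - ∑ j ∈ Finset.Icc 1 (k-1), (1/G (j+1) - 1/G j) * ∫ ω, Sc k ω ^ 2 / Sc j ω ∂μ := by
    simp only [habelL]
    have hA : Integrable (fun ω => 1/G k * Sc k ω - 1/G 1 * (Sc k ω ^ 2 / Sc 0 ω)) μ :=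
      ((hScint k hkK).const_mul _).sub ((hratio_int 0 (Nat.zero_le k)).const_mul _)
    have hB : Integrable (fun ω => 1/G k * Sc k ω) μ := (hScint k hkK).const_mul _
    have hC : Integrable (fun ω => 1/G 1 * (Sc k ω ^ 2 / Sc 0 ω)) μ :=
      (hratio_int 0 (Nat.zero_le k)).const_mul _
    rw [integral_sub hA hint_sum, integral_sub hB hC,
      integral_const_mul, integral_const_mul, integral_finset_sum _
        (fun j hj => (hratio_int j (by have := (Finset.mem_Icc.mp hj).2; omega)).const_mul _),
      hS k]
    congr 1
    exact Finset.sum_congr rfl fun j _ => integral_const_mul _ _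
  -- Abel rewriting of the RHS
  have hR : ∑ j ∈ Finset.Icc 1 k, S k ^ 2 * (1 / S j - 1 / S (j - 1)) / G j
      = (1/G k) * S k - (1/G 1) * (S k ^ 2 / S 0)
        - ∑ j ∈ Finset.Icc 1 (k-1), (1/G (j+1) - 1/G j) * (S k ^ 2 / S j) := by
    have h1 : ∑ j ∈ Finset.Icc 1 k, S k ^ 2 * (1 / S j - 1 / S (j - 1)) / G j
        = ∑ j ∈ Finset.Icc 1 k, (1/G j) * (S k ^ 2 / S j - S k ^ 2 / S (j-1)) :=
      Finset.sum_congr rfl fun j _ => by ring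
    rw [h1, abel_icc (fun j => 1/G j) (fun j => S k ^ 2 / S j) k hk]
    have hff : S k ^ 2 / S k = S k := by
      rw [pow_two]
      exact mul_div_cancel_right₀ _ (hSpos k hkK).ne'
    rw [hff]
  rw [hL, hR]
  have hG1 : (0:ℝ) ≤ 1 / G 1 := by
    have := (hGpos 1 (le_trans hk hkK)).1
    positivity
  apply sub_le_sub
  · apply sub_le_sub_left
    exact mul_le_mul_of_nonneg_left (key 0 (Nat.zero_le k)) hG1
  · apply Finset.sum_le_sum
    intro j hj
    obtain ⟨hj1, hj2⟩ := Finset.mem_Icc.mp hj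
    have hjK : j + 1 ≤ K := by omega
    have hd : (0:ℝ) ≤ 1/G (j+1) - 1/G j := by
      have h1 := (hGpos (j+1) hjK).1
      have h2 := (hGpos j (by omega)).1
      have h3 := hGanti j hj1 hjK
      have := one_div_le_one_div_of_le h1 h3
      linarith
    exact mul_le_mul_of_nonneg_left (key j (by omega)) hd
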